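/- Let T > 0, p₀ > 0, and let γ denote the standard Gaussian measure on ℝ (mean 0, variance 1). Let C̄ : ℝ → ℝ be continuous on (0,∞), nonnegative on (0,∞), nondecreasing on (0,∞), concave on (0,∞), and satisfy a linear growth bound C̄(q) ≤ A + B·q for all q > 0 for some constants A, B ≥ 0. Define G(σ) := ∫ C̄(p₀·exp(−σ²T/2 + σ√T·z)) dγ(z) for σ ≥ 0. Then G(0) = C̄(p₀) and G is nonincreasing on [0,∞). -/

import Mathlib

open MeasureTheory ProbabilityTheory Real
open scoped NNReal ENNReal

lemma gauss_int (m : ℝ) {v : ℝ≥0} (hv : v ≠ 0) (g : ℝ → ℝ) :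
    ∫ x, g x ∂(gaussianReal m v) = ∫ x, gaussianPDFReal m v x * g x := by
  rw [gaussianReal_of_var_ne_zero _ hv]
  have h : gaussianPDF m v = fun x => ((Real.toNNReal (gaussianPDFReal m v x) : ℝ≥0) : ℝ≥0∞) :=
    rfl
  rw [h, integral_withDensity_eq_integral_smul
    ((measurable_gaussianPDFReal m v).real_toNNReal)]
  congr 1; ext x
  rw [NNReal.smul_def, Real.coe_toNNReal _ (gaussianPDFReal_nonneg _ _ _)]
  rfl

lemma gauss_integrable_iff (m : ℝ) {v : ℝ≥0} (hv : v ≠ 0) (g : ℝ → ℝ) :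
    Integrable g (gaussianReal m v) ↔
      Integrable (fun x => gaussianPDFReal m v x * g x) volume := by
  rw [gaussianReal_of_var_ne_zero _ hv]
  have h : gaussianPDF m v = fun x => ((Real.toNNReal (gaussianPDFReal m v x) : ℝ≥0) : ℝ≥0∞) :=
    rfl
  rw [h, integrable_withDensity_iff_integrable_smul
    ((measurable_gaussianPDFReal m v).real_toNNReal)]
  apply integrable_congr; filter_upwards with x
  rw [NNReal.smul_def, Real.coe_toNNReal _ (gaussianPDFReal_nonneg _ _ _)]
  rfl

lemma pdf_mul_exp (c x : ℝ) :
    gaussianPDFReal 0 1 x * rexp (c * x)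
      = ((√(2*π))⁻¹ * rexp (c^2/2)) * rexp (-(1/2) * (x - c)^2) := by
  simp only [gaussianPDFReal, NNReal.coe_one, mul_one, sub_zero]
  rw [mul_assoc, ← Real.exp_add, mul_assoc, ← Real.exp_add]
  congr 2
  ring

lemma integrable_shift_sq (c : ℝ) :
    Integrable (fun x : ℝ => rexp (-(1/2) * (x - c)^2)) volume := by
  have h := integrable_exp_neg_mul_sq (by norm_num : (0:ℝ) < 1/2)
  simpa using h.comp_sub_right c

lemma gauss_exp_integrable (c : ℝ) :
    Integrable (fun z => rexp (c * z)) (gaussianReal 0 1) := by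
  rw [gauss_integrable_iff 0 one_ne_zero]
  simp_rw [pdf_mul_exp c]
  exact (integrable_shift_sq c).const_mul _

lemma gauss_exp_integral (c : ℝ) :
    ∫ z, rexp (c * z) ∂(gaussianReal 0 1) = rexp (c^2/2) := by
  rw [gauss_int 0 one_ne_zero]
  simp_rw [pdf_mul_exp c]
  rw [integral_const_mul]
  have h1 : ∫ x : ℝ, rexp (-(1/2) * (x - c)^2) = ∫ x : ℝ, rexp (-(1/2) * x^2) :=
    integral_sub_right_eq_self (fun x => rexp (-(1/2) * x^2)) c
  rw [h1, integral_gaussian]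
  have h2 : √(π / (1/2)) = √(2*π) := by norm_num [mul_comm]
  rw [h2, mul_comm ((√(2*π))⁻¹) _, mul_assoc]
  rw [inv_mul_cancel₀ (by positivity : √(2*π) ≠ 0), mul_one]

lemma integrable_shift_sq' {k : ℝ} (hk : 0 < k) (d : ℝ) :
    Integrable (fun x : ℝ => rexp (-k * (x - d)^2)) volume := by
  have h := integrable_exp_neg_mul_sq hk
  simpa using h.comp_sub_right d

lemma integral_shift_sq {k : ℝ} (hk : 0 < k) (d : ℝ) :
    ∫ x : ℝ, rexp (-k * (x - d)^2) = √(π/k) := by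
  rw [integral_sub_right_eq_self (fun x => rexp (-k * x^2)) d, integral_gaussian]

-- assume pdf_conv_pt from d.lean (pasted below in real file)
lemma pdf_conv_pt (a b u z : ℝ) (hb : b ≠ 0) :
    gaussianPDFReal 0 1 z * gaussianPDFReal (a*z) ⟨b^2, sq_nonneg b⟩ u
      = (gaussianPDFReal 0 ⟨a^2+b^2, by positivity⟩ u
          * (√(π/((a^2+b^2)/(2*b^2))))⁻¹)
        * rexp (-((a^2+b^2)/(2*b^2)) * (z - a*u/(a^2+b^2))^2) := by
  have hc2 : (0:ℝ) < a ^ 2 + b ^ 2 := by positivity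
  have hb2 : (0:ℝ) < b^2 := by positivity
  simp only [gaussianPDFReal, NNReal.coe_mk, sub_zero, mul_one, NNReal.coe_one]
  simp only [NNReal.toReal]
  rw [mul_mul_mul_comm, ← Real.exp_add]
  rw [show ∀ s t eA eB : ℝ, s * Real.exp eA * t * Real.exp eB
      = (s*t) * Real.exp (eA+eB) from fun _ _ _ _ => by rw [Real.exp_add]; ring]
  congr 1
  · rw [← mul_inv, ← mul_inv, ← Real.sqrt_mul (by positivity), ← Real.sqrt_mul (by positivity)]
    congr 1
    field_simp
  · congr 1
    field_simp
    ring

lemma pdf_conv (a b u : ℝ) (hb : b ≠ 0) :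
    ∫ z, gaussianPDFReal 0 1 z * gaussianPDFReal (a*z) ⟨b^2, sq_nonneg b⟩ u
      = gaussianPDFReal 0 ⟨a^2+b^2, by positivity⟩ u := by
  have hk : (0:ℝ) < (a^2+b^2)/(2*b^2) := by positivity
  simp_rw [pdf_conv_pt a b u _ hb]
  rw [integral_const_mul, integral_shift_sq hk]
  rw [mul_assoc, inv_mul_cancel₀ (by positivity : √(π/((a^2+b^2)/(2*b^2))) ≠ 0), mul_one]

lemma pdf_conv_integrable (a b u : ℝ) (hb : b ≠ 0) :
    Integrable (fun z => gaussianPDFReal 0 1 z * gaussianPDFReal (a*z) ⟨b^2, sq_nonneg b⟩ u)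
      volume := by
  have hk : (0:ℝ) < (a^2+b^2)/(2*b^2) := by positivity
  simp_rw [pdf_conv_pt a b u _ hb]
  exact (integrable_shift_sq' hk _).const_mul _

lemma lint_conv (a b u : ℝ) (hb : b ≠ 0) :
    ∫⁻ z, gaussianPDF 0 1 z * gaussianPDF (a*z) ⟨b^2, sq_nonneg b⟩ u
      = gaussianPDF 0 ⟨a^2+b^2, by positivity⟩ u := by
  simp_rw [gaussianPDF, ← ENNReal.ofReal_mul (gaussianPDFReal_nonneg _ _ _)]
  rw [← ofReal_integral_eq_lintegral_ofReal (pdf_conv_integrable a b u hb)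
    (ae_of_all _ fun z => mul_nonneg (gaussianPDFReal_nonneg _ _ _) (gaussianPDFReal_nonneg _ _ _)),
    pdf_conv a b u hb]

lemma map_lin (a b : ℝ) (hb : b ≠ 0) :
    Measure.map (fun p : ℝ × ℝ => a * p.1 + b * p.2)
      ((gaussianReal 0 1).prod (gaussianReal 0 1))
      = gaussianReal 0 ⟨a^2+b^2, by positivity⟩ := by
  have hvb : (⟨b^2, sq_nonneg b⟩ : ℝ≥0) ≠ 0 := by
    intro h
    exact pow_ne_zero 2 hb (by exact congrArg NNReal.toReal h)
  have hvc : (⟨a^2+b^2, by positivity⟩ : ℝ≥0) ≠ 0 := by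
    intro h
    have h2 := congrArg NNReal.toReal h
    replace h2 : a^2+b^2 = 0 := h2
    have : (0:ℝ) < a^2 + b^2 := by positivity
    linarith
  have hφ : Measurable fun p : ℝ × ℝ => a * p.1 + b * p.2 := by fun_prop
  ext s hs
  rw [Measure.map_apply hφ hs, Measure.prod_apply (hφ hs)]
  have inner : ∀ z : ℝ,
      (gaussianReal 0 1) (Prod.mk z ⁻¹' ((fun p : ℝ × ℝ => a*p.1+b*p.2) ⁻¹' s))
        = gaussianReal (a*z) ⟨b^2, sq_nonneg b⟩ s := by
    intro z
    have h1 : Prod.mk z ⁻¹' ((fun p : ℝ × ℝ => a*p.1+b*p.2) ⁻¹' s)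
        = (fun w => a*z + b*w) ⁻¹' s := rfl
    rw [h1, ← Measure.map_apply (by fun_prop) hs]
    have h2 : (fun w : ℝ => a*z + b*w) = (fun t => a*z + t) ∘ (fun w => b*w) := rfl
    rw [h2, ← Measure.map_map (by fun_prop) (by fun_prop)]
    have h3 : Measure.map (fun w : ℝ => b*w) (gaussianReal 0 1)
        = gaussianReal 0 ⟨b^2, sq_nonneg b⟩ := by
      have := gaussianReal_map_const_mul (μ := 0) (v := 1) b; simp at this; exact this
    rw [h3, show Measure.map (fun t : ℝ => a * z + t) (gaussianReal 0 ⟨b^2, sq_nonneg b⟩)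
        = gaussianReal (a*z) ⟨b^2, sq_nonneg b⟩ from by
      simpa using gaussianReal_map_const_add (μ := 0) (v := ⟨b^2, sq_nonneg b⟩) (a*z)]
  simp_rw [inner]
  have hG2 : Measurable fun q : ℝ × ℝ => gaussianPDF (a*q.1) ⟨b^2, sq_nonneg b⟩ q.2 := by
    simp only [gaussianPDF, gaussianPDFReal]
    apply Measurable.ennreal_ofReal
    fun_prop
  have hF : Measurable fun q : ℝ × ℝ =>
      gaussianPDF 0 1 q.1 * gaussianPDF (a*q.1) ⟨b^2, sq_nonneg b⟩ q.2 :=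
    ((measurable_gaussianPDF 0 1).comp measurable_fst).mul hG2
  calc ∫⁻ z, gaussianReal (a*z) ⟨b^2, sq_nonneg b⟩ s ∂(gaussianReal 0 1)
      = ∫⁻ z, (∫⁻ u in s, gaussianPDF (a*z) ⟨b^2, sq_nonneg b⟩ u) ∂(gaussianReal 0 1) :=
        lintegral_congr fun z => gaussianReal_apply _ hvb s
    _ = ∫⁻ z, gaussianPDF 0 1 z * ∫⁻ u in s, gaussianPDF (a*z) ⟨b^2, sq_nonneg b⟩ u := by
        rw [gaussianReal_of_var_ne_zero _ one_ne_zero,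
          lintegral_withDensity_eq_lintegral_mul _ (measurable_gaussianPDF 0 1)
            hG2.lintegral_prod_right']
        rfl
    _ = ∫⁻ z, ∫⁻ u, gaussianPDF 0 1 z * gaussianPDF (a*z) ⟨b^2, sq_nonneg b⟩ u
          ∂(volume.restrict s) :=
        lintegral_congr fun z =>
          (lintegral_const_mul _ (measurable_gaussianPDF _ _)).symm
    _ = ∫⁻ u, ∫⁻ z, gaussianPDF 0 1 z * gaussianPDF (a*z) ⟨b^2, sq_nonneg b⟩ u
          ∂(volume) ∂(volume.restrict s) :=
        lintegral_lintegral_swap hF.aemeasurable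
    _ = ∫⁻ u in s, gaussianPDF 0 ⟨a^2+b^2, by positivity⟩ u :=
        lintegral_congr fun u => lint_conv a b u hb
    _ = gaussianReal 0 ⟨a^2+b^2, by positivity⟩ s := (gaussianReal_apply _ hvc s).symm

lemma support_line {C : ℝ → ℝ} (hconc : ConcaveOn ℝ (Set.Ioi 0) C) {x : ℝ} (hx : 0 < x) :
    ∃ m : ℝ, ∀ y : ℝ, 0 < y → C y ≤ C x + m * (y - x) := by
  -- slope comparison : for y₁ < x < y₂ in Ioi 0, slope(y₁,x) ≥ slope(x,y₂)
  have hslope : ∀ y₁ y₂ : ℝ, 0 < y₁ → y₁ < x → x < y₂ →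
      (C y₂ - C x) / (y₂ - x) ≤ (C x - C y₁) / (x - y₁) := fun y₁ y₂ h1 h2 h3 =>
    hconc.slope_anti_adjacent h1 (lt_trans hx h3) h2 h3
  set S : Set ℝ := (fun y => (C y - C x) / (y - x)) '' Set.Ioi x with hS
  have hne : S.Nonempty := ⟨_, ⟨x + 1, by simp [hx], rfl⟩⟩
  have hbdd : BddAbove S := by
    refine ⟨(C x - C (x/2)) / (x - x/2), ?_⟩
    rintro _ ⟨y, hy, rfl⟩
    exact hslope (x/2) y (by linarith) (by linarith) hy
  refine ⟨sSup S, fun y hy => ?_⟩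
  rcases lt_trichotomy y x with h | h | h
  · -- y < x : sSup S ≤ slope(y,x)
    have hle : sSup S ≤ (C x - C y) / (x - y) := by
      apply csSup_le hne
      rintro _ ⟨y₂, hy₂, rfl⟩
      exact hslope y y₂ hy h hy₂
    have hxy : 0 < x - y := by linarith
    have := (div_le_div_iff₀ hxy hxy).1 (le_refl ((C x - C y) / (x - y)))
    nlinarith [mul_le_mul_of_nonneg_right hle hxy.le, div_mul_cancel₀ (C x - C y) hxy.ne']
  · simp [h]
  · -- x < y : slope(x,y) ≤ sSup S
    have hle : (C y - C x) / (y - x) ≤ sSup S := le_csSup hbdd ⟨y, h, rfl⟩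
    have hxy : 0 < y - x := by linarith
    nlinarith [mul_le_mul_of_nonneg_right hle hxy.le, div_mul_cancel₀ (C y - C x) hxy.ne']

section Key
variable {C : ℝ → ℝ} {A B : ℝ}

lemma integrable_comp (hcont : ContinuousOn C (Set.Ioi (0:ℝ)))
    (hnn : ∀ q : ℝ, 0 < q → 0 ≤ C q)
    (hA : 0 ≤ A) (hB : 0 ≤ B)
    (hgrowth : ∀ q : ℝ, 0 < q → C q ≤ A + B * q)
    (x₀ d c : ℝ) (hx₀ : 0 < x₀) :
    Integrable (fun z => C (x₀ * Real.exp (d + c * z))) (gaussianReal 0 1) := by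
  have hcg : Continuous fun z => C (x₀ * Real.exp (d + c * z)) :=
    hcont.comp_continuous (by fun_prop) (fun z => by simp only [Set.mem_Ioi]; positivity)
  refine Integrable.mono ((integrable_const A).add
    ((gauss_exp_integrable c).const_mul (B * x₀ * Real.exp d)))
    hcg.aestronglyMeasurable ?_
  filter_upwards with z
  have h1 : (0:ℝ) < x₀ * Real.exp (d + c * z) := by positivity
  rw [Real.norm_eq_abs, abs_of_nonneg (hnn _ h1)]
  refine le_trans ?_ (le_abs_self _)
  have h2 := hgrowth _ h1
  rw [Real.exp_add] at h2 ⊢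
  simp only [Pi.add_apply]
  ring_nf at h2 ⊢
  linarith

lemma key (T p₀ : ℝ) (hT : 0 < T) (hp₀ : 0 < p₀)
    (hcont : ContinuousOn C (Set.Ioi (0:ℝ)))
    (hnn : ∀ q : ℝ, 0 < q → 0 ≤ C q)
    (hconc : ConcaveOn ℝ (Set.Ioi (0:ℝ)) C)
    (hA : 0 ≤ A) (hB : 0 ≤ B)
    (hgrowth : ∀ q : ℝ, 0 < q → C q ≤ A + B * q)
    (σ₁ σ₂ : ℝ) (h1 : 0 ≤ σ₁) (hlt : σ₁ < σ₂) :
    (∫ z, C (p₀ * Real.exp (-σ₂^2 * T / 2 + σ₂ * Real.sqrt T * z)) ∂(gaussianReal 0 1))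
      ≤ ∫ z, C (p₀ * Real.exp (-σ₁^2 * T / 2 + σ₁ * Real.sqrt T * z)) ∂(gaussianReal 0 1) := by
  have h2 : (0:ℝ) < σ₂ := lt_of_le_of_lt h1 hlt
  set γ := gaussianReal 0 1 with hγ
  set a := σ₁ * Real.sqrt T with ha
  set c := σ₂ * Real.sqrt T with hc
  set b := Real.sqrt ((σ₂^2 - σ₁^2) * T) with hbdef
  have hdpos : (0:ℝ) < (σ₂^2 - σ₁^2) * T := by
    have : (0:ℝ) < σ₂^2 - σ₁^2 := by nlinarith
    exact mul_pos this hT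
  have hb2 : b^2 = (σ₂^2 - σ₁^2) * T := Real.sq_sqrt hdpos.le
  have hb0 : 0 < b := Real.sqrt_pos.2 hdpos
  have hsum : a^2 + b^2 = c^2 := by
    rw [hb2, ha, hc, mul_pow, mul_pow, Real.sq_sqrt hT.le]
    ring
  -- the function of the total exponent
  set g : ℝ → ℝ := fun u => C (p₀ * Real.exp (-σ₂^2 * T / 2 + u)) with hg
  have hgc : Continuous g :=
    hcont.comp_continuous (by fun_prop) (fun u => by simp only [Set.mem_Ioi]; positivity)
  have hmapc : Measure.map (fun z : ℝ => c * z) γ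
      = gaussianReal 0 ⟨a^2+b^2, by positivity⟩ := by
    rw [hγ, show (fun z : ℝ => c * z) = (c * ·) from rfl, gaussianReal_map_const_mul]
    rw [mul_zero, mul_one]
    congr 1
    exact Subtype.ext hsum.symm
  have hφm : Measurable fun p : ℝ × ℝ => a * p.1 + b * p.2 := by fun_prop
  have hint2 : Integrable (fun p : ℝ × ℝ => g (a * p.1 + b * p.2)) (γ.prod γ) := by
    refine Integrable.mono ((integrable_const A).add
      (((gauss_exp_integrable a).mul_prod (gauss_exp_integrable b)).const_mul
        (B * p₀ * Real.exp (-σ₂^2 * T / 2)))) ((hgc.comp (by fun_prop)).aestronglyMeasurable) ?_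
    filter_upwards with p
    have hq : (0:ℝ) < p₀ * Real.exp (-σ₂^2 * T / 2 + (a * p.1 + b * p.2)) := by positivity
    simp only [hg, Function.comp, Pi.add_apply]
    rw [Real.norm_eq_abs, abs_of_nonneg (hnn _ hq)]
    refine le_trans ?_ (le_abs_self _)
    have hgr := hgrowth _ hq
    rw [Real.exp_add, Real.exp_add] at hgr ⊢
    ring_nf at hgr ⊢
    linarith
  calc (∫ z, C (p₀ * Real.exp (-σ₂^2 * T / 2 + c * z)) ∂γ)
      = ∫ u, g u ∂(Measure.map (fun z : ℝ => c * z) γ) := by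
        rw [integral_map (by fun_prop : Measurable fun z : ℝ => c * z).aemeasurable
          hgc.aestronglyMeasurable]
    _ = ∫ p, g (a * p.1 + b * p.2) ∂(γ.prod γ) := by
        rw [hmapc, ← map_lin a b hb0.ne', integral_map hφm.aemeasurable
          hgc.aestronglyMeasurable]
    _ = ∫ z, ∫ w, g (a * z + b * w) ∂γ ∂γ := integral_prod _ hint2
    _ ≤ ∫ z, C (p₀ * Real.exp (-σ₁^2 * T / 2 + a * z)) ∂γ := by
        refine integral_mono hint2.integral_prod_left
          (integrable_comp hcont hnn hA hB hgrowth p₀ (-σ₁^2 * T / 2) a hp₀) ?_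
        intro z
        have hxpos : (0:ℝ) < p₀ * Real.exp (-σ₁^2 * T / 2 + a * z) := by positivity
        set x := p₀ * Real.exp (-σ₁^2 * T / 2 + a * z) with hxdef
        obtain ⟨m, hm⟩ := support_line hconc hxpos
        have hrep : ∀ w, g (a * z + b * w) = C (x * Real.exp (-b^2/2 + b * w)) := by
          intro w
          simp only [hg]
          congr 1
          rw [hxdef]
          simp only [mul_assoc, ← Real.exp_add]
          congr 2
          rw [hb2]; ring
        have hrw : (fun w => C x + m * (x * Real.exp (-b^2/2 + b * w) - x))
            = fun w => (C x - m * x) + (m * x * Real.exp (-b^2/2)) * Real.exp (b * w) := by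
          funext w; rw [Real.exp_add]; ring
        have hintR : Integrable (fun w => C x + m * (x * Real.exp (-b^2/2 + b * w) - x)) γ := by
          rw [hrw]
          exact (integrable_const _).add ((gauss_exp_integrable b).const_mul _)
        have hintL : Integrable (fun w => C (x * Real.exp (-b^2/2 + b * w))) γ :=
          integrable_comp hcont hnn hA hB hgrowth x (-b^2/2) b hxpos
        calc ∫ w, g (a * z + b * w) ∂γ
            = ∫ w, C (x * Real.exp (-b^2/2 + b * w)) ∂γ := by simp_rw [hrep]
          _ ≤ ∫ w, (C x + m * (x * Real.exp (-b^2/2 + b * w) - x)) ∂γ :=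
              integral_mono hintL hintR (fun w => hm _ (by positivity))
          _ = C x := by
              rw [hrw, integral_add (integrable_const _)
                ((gauss_exp_integrable b).const_mul _),
                integral_const, integral_const_mul, gauss_exp_integral]
              simp only [measure_univ, ENNReal.toReal_one, probReal_univ, one_smul]
              have hone : Real.exp (-b^2/2) * Real.exp (b^2/2) = 1 := by
                rw [← Real.exp_add, show -b^2/2 + b^2/2 = 0 from by ring, Real.exp_zero]
              linear_combination (m * x) * hone
end Key

/-- Let `C̄` be continuous, nonnegative, nondecreasing, and concave on
`(0,∞)` with linear growth `C̄(q) ≤ A + B·q`. Then the risk-neutral expected discounted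
pool value `G(σ) = ∫ C̄(p₀·exp(−σ²T/2 + σ√T·z)) dγ(z)` (with `γ` the standard Gaussian)
satisfies `G(0) = C̄(p₀)` and `G` is nonincreasing on `[0,∞)`. -/
theorem expected_pool_value_antitone (T p₀ : ℝ) (hT : 0 < T) (hp₀ : 0 < p₀)
    (C : ℝ → ℝ) (hcont : ContinuousOn C (Set.Ioi (0 : ℝ)))
    (hnn : ∀ q : ℝ, 0 < q → 0 ≤ C q)
    (hmono : MonotoneOn C (Set.Ioi (0 : ℝ)))
    (hconc : ConcaveOn ℝ (Set.Ioi (0 : ℝ)) C)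
    (A B : ℝ) (hA : 0 ≤ A) (hB : 0 ≤ B)
    (hgrowth : ∀ q : ℝ, 0 < q → C q ≤ A + B * q) :
    let G : ℝ → ℝ := fun σ =>
      ∫ z, C (p₀ * Real.exp (-σ ^ 2 * T / 2 + σ * Real.sqrt T * z))
        ∂(gaussianReal 0 1)
    G 0 = C p₀ ∧ AntitoneOn G (Set.Ici (0 : ℝ)) := by
  intro G
  constructor
  · show (∫ z, C (p₀ * Real.exp (-(0:ℝ) ^ 2 * T / 2 + 0 * Real.sqrt T * z))
        ∂(gaussianReal 0 1)) = C p₀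
    have h0 : (fun z : ℝ => C (p₀ * Real.exp (-(0:ℝ) ^ 2 * T / 2 + 0 * Real.sqrt T * z)))
        = fun _ => C p₀ := by
      funext z; norm_num
    rw [h0, integral_const]
    simp
  · intro σ₁ hσ₁ σ₂ _ h12
    rcases eq_or_lt_of_le h12 with rfl | hlt
    · exact le_refl _
    · exact key T p₀ hT hp₀ hcont hnn hconc hA hB hgrowth σ₁ σ₂ hσ₁ hlt
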